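/- Let f, g : ℝ → ℝ be continuous on [0,1]-type domains and n, p natural numbers. Then ∫₀¹ ∫₀¹ s^n · t^p · f(s) · g(s + t(1-s)) · (1-s) ds dt = ∫₀¹ ∫₀¹ (s')^n · (t')^(n+p) · ((1-s')/(1-s't'))^p · f(s't') · g(t') · t' ds' dt', where both sides are interpreted as iterated integrals over the unit square (and the integrand on the right is extended by continuity at s't' = 1). -/

import Mathlib

open intervalIntegral MeasureTheory Set Function

theorem stmt_1 (f g : ℝ → ℝ) (hf : Continuous f) (hg : Continuous g) (n p : ℕ) :
    (∫ t in (0:ℝ)..1, ∫ s in (0:ℝ)..1,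
        s ^ n * t ^ p * f s * g (s + t * (1 - s)) * (1 - s))
      = ∫ t' in (0:ℝ)..1, ∫ s' in (0:ℝ)..1,
          s' ^ n * t' ^ (n + p) * ((1 - s') / (1 - s' * t')) ^ p
            * f (s' * t') * g t' * t' := by
  have h01 : (0:ℝ) ≤ 1 := zero_le_one
  set I : Set ℝ := Set.Ioc (0:ℝ) 1 with hI
  obtain ⟨Mf, hMf⟩ : ∃ M, ∀ x ∈ Set.Icc (0:ℝ) 1, ‖f x‖ ≤ M :=
    isCompact_Icc.exists_bound_of_continuousOn hf.continuousOn
  obtain ⟨Mg, hMg⟩ : ∃ M, ∀ x ∈ Set.Icc (0:ℝ) 1, ‖g x‖ ≤ M :=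
    isCompact_Icc.exists_bound_of_continuousOn hg.continuousOn
  have hMf0 : 0 ≤ Mf := le_trans (norm_nonneg _) (hMf 0 (by norm_num))
  have hMg0 : 0 ≤ Mg := le_trans (norm_nonneg _) (hMg 0 (by norm_num))
  set A : ℝ → ℝ → ℝ := fun s t => s ^ n * t ^ p * f s * g (s + t * (1 - s)) * (1 - s) with hA
  set H : ℝ → ℝ → ℝ := fun s u => s ^ n * f s * ((u - s) / (1 - s)) ^ p * g u with hH
  set R : ℝ → ℝ → ℝ := fun s' t' => s' ^ n * t' ^ (n + p) * ((1 - s') / (1 - s' * t')) ^ p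
            * f (s' * t') * g t' * t' with hR
  set K : ℝ → ℝ → ℝ := fun s u => (Set.Ioc s 1).indicator (H s) u with hK
  have hprodres : (volume.restrict I).prod (volume.restrict I)
      = ((volume : Measure ℝ).prod volume).restrict (I ×ˢ I) := Measure.prod_restrict I I
  haveI hfinprod : IsFiniteMeasure (((volume : Measure ℝ).prod volume).restrict (I ×ˢ I)) :=
    ⟨by rw [Measure.restrict_apply_univ, Measure.prod_prod]; simp [hI]⟩
  -- integrability for rectangle Fubini
  have hint1 : Integrable (uncurry fun t s => A s t)
      ((volume.restrict I).prod (volume.restrict I)) := by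
    rw [hprodres]
    refine Integrable.mono' (integrable_const (Mf * Mg)) ?_ ?_
    · refine Continuous.aestronglyMeasurable ?_
      rw [hA]; fun_prop
    · filter_upwards [ae_restrict_mem (measurableSet_Ioc.prod measurableSet_Ioc)] with q hq
      obtain ⟨ht, hs⟩ : q.1 ∈ I ∧ q.2 ∈ I := hq
      set t := q.1
      set s := q.2
      have hs0 : (0:ℝ) ≤ s := hs.1.le
      have hs1 : s ≤ 1 := hs.2
      have ht0 : (0:ℝ) ≤ t := ht.1.le
      have ht1 : t ≤ 1 := ht.2
      have harg : s + t * (1 - s) ∈ Set.Icc (0:ℝ) 1 :=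
        ⟨by nlinarith, by nlinarith⟩
      have e1 : |s| ^ n ≤ 1 := pow_le_one₀ (abs_nonneg _) (abs_le.mpr ⟨by linarith, hs1⟩)
      have e2 : |t| ^ p ≤ 1 := pow_le_one₀ (abs_nonneg _) (abs_le.mpr ⟨by linarith, ht1⟩)
      have e3 : |1 - s| ≤ 1 := abs_le.mpr ⟨by linarith, by linarith⟩
      have e4 : |f s| ≤ Mf := by simpa [Real.norm_eq_abs] using hMf s ⟨hs0, hs1⟩
      have e5 : |g (s + t * (1 - s))| ≤ Mg := by
        simpa [Real.norm_eq_abs] using hMg _ harg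
      have : ‖A s t‖ = |s| ^ n * |t| ^ p * |f s| * |g (s + t * (1 - s))| * |1 - s| := by
        simp only [hA, Real.norm_eq_abs, abs_mul, abs_pow]
      rw [uncurry, this]
      calc |s| ^ n * |t| ^ p * |f s| * |g (s + t * (1 - s))| * |1 - s|
          ≤ 1 * 1 * Mf * Mg * 1 := by gcongr
        _ = Mf * Mg := by ring
  -- integrability for triangle Fubini
  have hint2 : Integrable (uncurry K) ((volume.restrict I).prod (volume.restrict I)) := by
    have hTmeas : MeasurableSet {q : ℝ × ℝ | q.1 < q.2 ∧ q.2 ≤ 1} :=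
      (measurableSet_lt measurable_fst measurable_snd).inter
        (measurableSet_le measurable_snd measurable_const)
    have hKeq : uncurry K
        = Set.indicator {q : ℝ × ℝ | q.1 < q.2 ∧ q.2 ≤ 1} (fun q => H q.1 q.2) := by
      funext q
      simp only [uncurry, hK, Set.indicator_apply, Set.mem_Ioc, Set.mem_setOf_eq]
    have hHmeas : Measurable fun q : ℝ × ℝ => H q.1 q.2 := by
      rw [hH]
      exact (((measurable_fst.pow_const n).mul (hf.measurable.comp measurable_fst)).mul
        (((measurable_snd.sub measurable_fst).div
          ((measurable_const.sub measurable_fst))).pow_const p)).mul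
        (hg.measurable.comp measurable_snd)
    rw [hprodres]
    refine Integrable.mono' (integrable_const (Mf * Mg)) ?_ ?_
    · rw [hKeq]
      exact (hHmeas.indicator hTmeas).aestronglyMeasurable
    · filter_upwards [ae_restrict_mem (measurableSet_Ioc.prod measurableSet_Ioc)] with q hq
      obtain ⟨hs, hu⟩ : q.1 ∈ I ∧ q.2 ∈ I := hq
      rw [hKeq]
      by_cases hqT : q ∈ {q : ℝ × ℝ | q.1 < q.2 ∧ q.2 ≤ 1}
      · rw [Set.indicator_of_mem hqT]
        obtain ⟨hlt, hle⟩ := hqT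
        set s := q.1
        set u := q.2
        have hs0 : (0:ℝ) ≤ s := hs.1.le
        have hs1 : s < 1 := lt_of_lt_of_le hlt hle
        have hr0 : 0 ≤ (u - s) / (1 - s) := div_nonneg (by linarith) (by linarith)
        have hr1 : (u - s) / (1 - s) ≤ 1 := (div_le_one (by linarith)).mpr (by linarith)
        have e1 : |s| ^ n ≤ 1 := pow_le_one₀ (abs_nonneg _) (abs_le.mpr ⟨by linarith, hs1.le⟩)
        have e2 : |((u - s) / (1 - s)) ^ p| ≤ 1 := by
          rw [abs_pow]
          exact pow_le_one₀ (abs_nonneg _) (abs_le.mpr ⟨by linarith, hr1⟩)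
        have e4 : |f s| ≤ Mf := by simpa [Real.norm_eq_abs] using hMf s ⟨hs0, hs1.le⟩
        have e5 : |g u| ≤ Mg := by
          simpa [Real.norm_eq_abs] using hMg u ⟨hu.1.le, hu.2⟩
        have : ‖H s u‖ = |s| ^ n * |f s| * |((u - s) / (1 - s)) ^ p| * |g u| := by
          simp only [hH, Real.norm_eq_abs, abs_mul, abs_pow]
        rw [this]
        calc |s| ^ n * |f s| * |((u - s) / (1 - s)) ^ p| * |g u|
            ≤ 1 * Mf * 1 * Mg := by gcongr
          _ = Mf * Mg := by ring
      · rw [Set.indicator_of_notMem hqT]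
        simpa using mul_nonneg hMf0 hMg0
  -- step B : inner substitution
  have hB : ∀ s ∈ Set.Icc (0:ℝ) 1, (∫ t in (0:ℝ)..1, A s t) = ∫ u in s..1, H s u := by
    intro s hs
    rcases eq_or_lt_of_le hs.2 with h1 | h1
    · simp [hA, hH, ← h1]
    · have hc : (1:ℝ) - s ≠ 0 := by linarith
      set F : ℝ → ℝ := fun u => s ^ n * ((u - s) / (1 - s)) ^ p * f s * g u * (1 - s) with hF
      have key : ∀ t : ℝ, A s t = F (s + (1 - s) * t) := by
        intro t
        have h2 : (s + (1 - s) * t - s) / (1 - s) = t := by field_simp; ring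
        simp only [hA, hF, h2]
        ring_nf
      calc (∫ t in (0:ℝ)..1, A s t) = ∫ t in (0:ℝ)..1, F (s + (1 - s) * t) := by
            simp only [key]
        _ = (1 - s)⁻¹ • ∫ u in (s + (1-s)*0)..(s + (1-s)*1), F u :=
            integral_comp_add_mul F hc s
        _ = ∫ u in s..1, (1 - s)⁻¹ * F u := by
            rw [smul_eq_mul, ← intervalIntegral.integral_const_mul]
            norm_num
        _ = ∫ u in s..1, H s u := by
            refine integral_congr fun u _ => ?_
            simp only [hF, hH]
            field_simp
  -- step C : B s as indicator integral over I
  have hC : ∀ s ∈ I, (∫ u in s..1, H s u) = ∫ u in I, K s u := by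
    intro s hs
    have hsub : Set.Ioc s 1 ⊆ Set.Ioc (0:ℝ) 1 := Set.Ioc_subset_Ioc_left hs.1.le
    rw [integral_of_le hs.2, hK]
    rw [setIntegral_indicator measurableSet_Ioc, Set.inter_eq_right.mpr hsub]
  -- step D : substitution s = u * s'
  have hD : ∀ u ∈ I, (∫ s in I, K s u) = ∫ s' in (0:ℝ)..1, R s' u := by
    intro u hu
    have hu0 : u ≠ 0 := ne_of_gt hu.1
    have h1 : ∀ s : ℝ, K s u = (Set.Iio u).indicator (fun s => H s u) s := by
      intro s
      by_cases h : s < u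
      · simp [hK, Set.indicator, Set.mem_Ioc, Set.mem_Iio, h, hu.2]
      · simp [hK, Set.indicator, Set.mem_Ioc, Set.mem_Iio, h]
    calc (∫ s in I, K s u)
        = ∫ s in I, (Set.Iio u).indicator (fun s => H s u) s := by
          simp only [h1]
      _ = ∫ s in Set.Ioo (0:ℝ) u, H s u := by
          have hset : Set.Iio u ∩ Set.Ioc 0 1 = Set.Ioo 0 u := by
            ext x
            simp only [Set.mem_inter_iff, Set.mem_Iio, Set.mem_Ioc, Set.mem_Ioo]
            constructor
            · rintro ⟨h1', h2', _⟩; exact ⟨h2', h1'⟩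
            · rintro ⟨h2', h1'⟩; exact ⟨h1', h2', le_trans h1'.le hu.2⟩
          rw [setIntegral_indicator measurableSet_Iio, Set.inter_comm, hset]
      _ = ∫ s in (0:ℝ)..u, H s u := by
          rw [integral_of_le hu.1.le, integral_Ioc_eq_integral_Ioo]
      _ = u * ∫ s' in (0:ℝ)..1, H (u * s') u := by
          have h2 := integral_comp_mul_left (a := (0:ℝ)) (b := 1) (fun s => H s u) hu0
          simp only [mul_zero, mul_one] at h2
          rw [h2, smul_eq_mul, ← mul_assoc, mul_inv_cancel₀ hu0, one_mul]
      _ = ∫ s' in (0:ℝ)..1, R s' u := by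
          rw [← intervalIntegral.integral_const_mul]
          refine integral_congr fun s' _ => ?_
          have key : (u - u * s') / (1 - u * s') = u * ((1 - s') / (1 - s' * u)) := by
            rw [show u - u * s' = u * (1 - s') by ring, show (1:ℝ) - u * s' = 1 - s' * u by ring,
              mul_div_assoc]
          simp only [hH, hR, key]
          rw [mul_pow u ((1 - s') / (1 - s' * u)) p, pow_add,
            show u * s' = s' * u from mul_comm u s']
          ring
  calc (∫ t in (0:ℝ)..1, ∫ s in (0:ℝ)..1, A s t)
      = ∫ t in I, ∫ s in I, A s t := by
        rw [integral_of_le h01]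
        refine setIntegral_congr_fun measurableSet_Ioc fun t _ => ?_
        rw [integral_of_le h01]
    _ = ∫ s in I, ∫ t in I, A s t := integral_integral_swap hint1
    _ = ∫ s in I, ∫ u in I, K s u := by
        refine setIntegral_congr_fun measurableSet_Ioc fun s hs => ?_
        rw [← integral_of_le h01, hB s (Set.Ioc_subset_Icc_self hs), hC s hs]
    _ = ∫ u in I, ∫ s in I, K s u := integral_integral_swap hint2
    _ = ∫ t' in (0:ℝ)..1, ∫ s' in (0:ℝ)..1, R s' t' := by
        rw [integral_of_le h01]
        exact setIntegral_congr_fun measurableSet_Ioc fun u hu => hD u hu
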